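/- Let β given (Y, ω) be distributed as N(β̃_ω, Σ̃_ω) with β̃_ω = (ΦᵀΦ + (ω/(1-ω))ΦᵀQ̄₀Φ)⁻¹ΦᵀY and Σ̃_ω = σ²(ΦᵀΦ + (ω/(1-ω))ΦᵀQ̄₀Φ)⁻¹, where Q̄₀ = I - Q₀. If 𝔏(Φ₀) ⊊ 𝔏(Φ), then the conditional mean of the fitted vector satisfies E[Φβ | Y, ω] = (1-ω)·Q_Φ·Y + ω·Q₀·Y. -/
import Mathlib


open Matrix MeasureTheory

lemma gram_isUnit {m p : ℕ} (A : Matrix (Fin m) (Fin p) ℝ) (h : A.rank = p) :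
    IsUnit (Aᵀ * A) := by
  rw [← Matrix.mulVec_surjective_iff_isUnit]
  have h1 : (Aᵀ * A).rank = p := by rw [Matrix.rank_transpose_mul_self, h]
  have h2 : LinearMap.range (Aᵀ * A).mulVecLin = ⊤ := by
    apply Submodule.eq_top_of_finrank_eq
    rw [Module.finrank_fin_fun]
    exact h1
  exact fun v => LinearMap.range_eq_top.mp h2 v

/-- Lemma 1: if `β | (Y, ω)` has a distribution with mean
`β̃_ω = (ΦᵀΦ + (ω/(1-ω))ΦᵀQ̄₀Φ)⁻¹ ΦᵀY` (e.g. the Gaussian conditional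
posterior `N(β̃_ω, Σ̃_ω)`), and `𝔏(Φ₀) ⊊ 𝔏(Φ)` with both of full column rank,
then the conditional mean of the fitted vector is
`E[Φβ | Y, ω] = (1-ω) Q_Φ Y + ω Q₀ Y`. -/
theorem fhs_posterior_mean (n d₀ k : ℕ)
    (Φ₀ : Matrix (Fin n) (Fin d₀) ℝ) (Φ : Matrix (Fin n) (Fin k) ℝ)
    (hrank₀ : Φ₀.rank = d₀) (hrank : Φ.rank = k) (hdk : d₀ < k)
    (hsub : LinearMap.range Φ₀.mulVecLin < LinearMap.range Φ.mulVecLin)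
    (Y : Fin n → ℝ) (ω : ℝ) (hω0 : 0 < ω) (hω1 : ω < 1) (σ : ℝ) (hσ : 0 < σ)
    (μ : Measure (Fin k → ℝ)) [IsProbabilityMeasure μ]
    (hint : ∀ j : Fin k, Integrable (fun β : Fin k → ℝ => β j) μ)
    (hmean : ∀ j : Fin k,
      (∫ β, β j ∂μ) =
        ((Φᵀ * Φ + (ω / (1 - ω)) •
            (Φᵀ * (1 - Φ₀ * (Φ₀ᵀ * Φ₀)⁻¹ * Φ₀ᵀ) * Φ))⁻¹ *ᵥ (Φᵀ *ᵥ Y)) j) :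
    ∀ i : Fin n,
      (∫ β, (Φ *ᵥ β) i ∂μ) =
        ((1 - ω) • ((Φ * (Φᵀ * Φ)⁻¹ * Φᵀ) *ᵥ Y) +
          ω • ((Φ₀ * (Φ₀ᵀ * Φ₀)⁻¹ * Φ₀ᵀ) *ᵥ Y)) i := by
  intro i
  have hω : (1 : ℝ) - ω ≠ 0 := by linarith
  set c : ℝ := ω / (1 - ω) with hc
  have hU : IsUnit ((Φᵀ * Φ).det) := (Matrix.isUnit_iff_isUnit_det _).mp (gram_isUnit Φ hrank)
  have hU₀ : IsUnit ((Φ₀ᵀ * Φ₀).det) :=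
    (Matrix.isUnit_iff_isUnit_det _).mp (gram_isUnit Φ₀ hrank₀)
  set G : Matrix (Fin k) (Fin k) ℝ := (Φᵀ * Φ)⁻¹ with hGdef
  set G₀ : Matrix (Fin d₀) (Fin d₀) ℝ := (Φ₀ᵀ * Φ₀)⁻¹ with hG₀def
  have f1 : (Φᵀ * Φ) * G = 1 := Matrix.mul_nonsing_inv _ hU
  have f2 : G * (Φᵀ * Φ) = 1 := Matrix.nonsing_inv_mul _ hU
  have f2₀ : G₀ * (Φ₀ᵀ * Φ₀) = 1 := Matrix.nonsing_inv_mul _ hU₀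
  set Q : Matrix (Fin n) (Fin n) ℝ := Φ * G * Φᵀ with hQdef
  set Q₀ : Matrix (Fin n) (Fin n) ℝ := Φ₀ * G₀ * Φ₀ᵀ with hQ₀def
  -- symmetry
  have hGsym : Gᵀ = G := by
    rw [hGdef, Matrix.transpose_nonsing_inv, Matrix.transpose_mul, Matrix.transpose_transpose]
  have hQsym : Qᵀ = Q := by
    rw [hQdef, Matrix.transpose_mul, Matrix.transpose_mul, Matrix.transpose_transpose, hGsym,
      Matrix.mul_assoc]
  -- projection identities
  have hQΦ : Q * Φ = Φ := by
    rw [hQdef]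
    calc Φ * G * Φᵀ * Φ = Φ * (G * (Φᵀ * Φ)) := by rw [Matrix.mul_assoc, Matrix.mul_assoc]
    _ = Φ := by rw [f2, Matrix.mul_one]
  have hQΦ₀ : Q * Φ₀ = Φ₀ := by
    ext a b
    obtain ⟨v, hv⟩ := hsub.le (LinearMap.mem_range_self Φ₀.mulVecLin (Pi.single b 1))
    have hv' : Φ *ᵥ v = Φ₀ *ᵥ Pi.single b 1 := hv
    have h1 : (Q * Φ₀) *ᵥ Pi.single b 1 = Φ₀ *ᵥ Pi.single b 1 := by
      rw [← Matrix.mulVec_mulVec, ← hv', Matrix.mulVec_mulVec, hQΦ]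
    have h2 := congrFun h1 a
    simpa using h2
  have hP0TQ : Φ₀ᵀ * Q = Φ₀ᵀ := by
    have h3 := congrArg Matrix.transpose hQΦ₀
    rwa [Matrix.transpose_mul, hQsym] at h3
  have hQQ₀ : Q * Q₀ = Q₀ := by
    conv_lhs => rw [hQ₀def]
    calc Q * (Φ₀ * G₀ * Φ₀ᵀ) = (Q * Φ₀) * G₀ * Φ₀ᵀ := by simp only [Matrix.mul_assoc]
    _ = Q₀ := by rw [hQΦ₀, ← hQ₀def]
  have hQ₀Q : Q₀ * Q = Q₀ := by
    conv_lhs => rw [hQ₀def]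
    calc (Φ₀ * G₀ * Φ₀ᵀ) * Q = Φ₀ * G₀ * (Φ₀ᵀ * Q) := by rw [Matrix.mul_assoc]
    _ = Q₀ := by rw [hP0TQ, ← hQ₀def]
  have hQ₀Q₀ : Q₀ * Q₀ = Q₀ := by
    conv_lhs => rw [hQ₀def]
    calc (Φ₀ * G₀ * Φ₀ᵀ) * (Φ₀ * G₀ * Φ₀ᵀ)
        = Φ₀ * (G₀ * (Φ₀ᵀ * Φ₀)) * (G₀ * Φ₀ᵀ) := by simp only [Matrix.mul_assoc]
    _ = Φ₀ * (G₀ * Φ₀ᵀ) := by rw [f2₀, Matrix.mul_one]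
    _ = Q₀ := by rw [hQ₀def, Matrix.mul_assoc]
  -- abbreviations for the key algebra
  set S : Matrix (Fin k) (Fin k) ℝ := Φᵀ * Φ with hSdef
  set P : Matrix (Fin k) (Fin k) ℝ := Φᵀ * Q₀ * Φ with hPdef
  have hSP : Φᵀ * (1 - Q₀) * Φ = S - P := by
    rw [Matrix.mul_sub, Matrix.mul_one, Matrix.sub_mul]
  set A : Matrix (Fin k) (Fin k) ℝ := S + c • (Φᵀ * (1 - Q₀) * Φ) with hAdef
  set M : Matrix (Fin k) (Fin k) ℝ := (1 - ω) • G + ω • (G * P * G) with hMdef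
  -- P * G * P = P
  have hPGP : P * (G * P * G) = P * G := by
    conv_lhs => rw [hPdef]
    calc (Φᵀ * Q₀ * Φ) * (G * (Φᵀ * Q₀ * Φ) * G)
        = Φᵀ * ((Q₀ * (Φ * G * Φᵀ)) * Q₀) * (Φ * G) := by simp only [Matrix.mul_assoc]
    _ = Φᵀ * Q₀ * (Φ * G) := by rw [← hQdef, hQ₀Q, hQ₀Q₀]
    _ = P * G := by rw [hPdef]; simp only [Matrix.mul_assoc]
  -- S * M and P * M
  have e1 : S * M = (1 - ω) • (1 : Matrix (Fin k) (Fin k) ℝ) + ω • (P * G) := by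
    rw [hMdef, Matrix.mul_add, Matrix.mul_smul, Matrix.mul_smul, hSdef, f1]
    congr 1
    rw [← Matrix.mul_assoc, ← Matrix.mul_assoc, f1, Matrix.one_mul]
  have e2 : P * M = P * G := by
    rw [hMdef, Matrix.mul_add, Matrix.mul_smul, Matrix.mul_smul, hPGP, ← add_smul,
      sub_add_cancel, one_smul]
  -- A * M = 1
  have key : A * M = 1 := by
    rw [hAdef, hSP, Matrix.add_mul, Matrix.smul_mul, Matrix.sub_mul, e1, e2, hc]
    match_scalars <;> field_simp <;> ring
  have hAinv : A⁻¹ = M := Matrix.inv_eq_right_inv key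
  -- Φ * M * Φᵀ = (1-ω) Q + ω Q₀
  have hQPQ : Φ * (G * P * G) * Φᵀ = Q₀ := by
    conv_lhs => rw [hPdef]
    calc Φ * (G * (Φᵀ * Q₀ * Φ) * G) * Φᵀ
        = (Φ * G * Φᵀ) * Q₀ * (Φ * G * Φᵀ) := by simp only [Matrix.mul_assoc]
    _ = Q₀ := by rw [← hQdef, hQQ₀, hQ₀Q]
  have hfin : Φ * M * Φᵀ = (1 - ω) • Q + ω • Q₀ := by
    rw [hMdef]
    calc Φ * ((1 - ω) • G + ω • (G * P * G)) * Φᵀ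
        = (1 - ω) • (Φ * G * Φᵀ) + ω • (Φ * (G * P * G) * Φᵀ) := by
          rw [Matrix.mul_add, Matrix.add_mul, Matrix.mul_smul, Matrix.mul_smul, Matrix.smul_mul,
            Matrix.smul_mul]
    _ = (1 - ω) • Q + ω • Q₀ := by rw [← hQdef, hQPQ]
  -- compute the integral
  have hint' : (∫ β, (Φ *ᵥ β) i ∂μ) = (Φ *ᵥ (A⁻¹ *ᵥ (Φᵀ *ᵥ Y))) i := by
    calc (∫ β, (Φ *ᵥ β) i ∂μ) = ∫ β, ∑ j, Φ i j * β j ∂μ := rfl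
    _ = ∑ j, ∫ β, Φ i j * β j ∂μ :=
        integral_finset_sum _ (fun j _ => (hint j).const_mul _)
    _ = ∑ j, Φ i j * ∫ β, β j ∂μ := by
        simp only [MeasureTheory.integral_const_mul]
    _ = ∑ j, Φ i j * ((A⁻¹ *ᵥ (Φᵀ *ᵥ Y)) j) := by
        simp only [hmean]
    _ = (Φ *ᵥ (A⁻¹ *ᵥ (Φᵀ *ᵥ Y))) i := rfl
  rw [hint', hAinv]
  have hfin' : Φ *ᵥ (M *ᵥ (Φᵀ *ᵥ Y)) = (1 - ω) • (Q *ᵥ Y) + ω • (Q₀ *ᵥ Y) := by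
    rw [Matrix.mulVec_mulVec, Matrix.mulVec_mulVec, hfin,
      Matrix.add_mulVec, Matrix.smul_mulVec, Matrix.smul_mulVec]
  exact congrFun hfin' i
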